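/- Let d and S be positive integers, ε > 0, and b, f ∈ ℝ with |f| ≤ ε. Let X be a real symmetric positive semidefinite d × d matrix with trace 1, let A be a real d × d matrix with spectral (ℓ₂ operator) norm ‖A‖₂ ≤ 1, and let E be a real d × d matrix with at most S nonzero entries, each satisfying |E_{jk}| ≤ ε/min(d, S). If the Frobenius inner product satisfies ⟨A + E, X⟩_F ≤ b + f, then ⟨A, X + (3ε/d)·I⟩_F ≤ b + 5ε, where I is the d × d identity matrix. -/

import Mathlib

set_option maxHeartbeats 1000000

open Finset
open scoped Matrix.Norms.L2Operator

section aux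

variable {d : ℕ}

lemma quad_nonneg (X : Matrix (Fin d) (Fin d) ℝ) (hX : X.PosSemidef)
    (v : Fin d → ℝ) : 0 ≤ ∑ i, v i * ∑ l, X i l * v l := by
  have h := hX.dotProduct_mulVec_nonneg v
  simpa [dotProduct, Matrix.mulVec, dotProduct] using h

lemma diag_nonneg' (X : Matrix (Fin d) (Fin d) ℝ) (hX : X.PosSemidef)
    (i : Fin d) : 0 ≤ X i i := by
  have := quad_nonneg X hX (Pi.single i 1)
  simpa [Pi.single_apply, Finset.mul_sum, Finset.sum_ite_eq', mul_ite] using this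

lemma abs_entry_le (X : Matrix (Fin d) (Fin d) ℝ) (hX : X.PosSemidef)
    (j k : Fin d) : |X j k| ≤ (X j j + X k k) / 2 := by
  have hsym : X k j = X j k := by
    have := congrFun (congrFun hX.1.symm k) j
    simpa [Matrix.conjTranspose_apply] using this
  rcases eq_or_ne j k with rfl | hjk
  · rw [abs_of_nonneg (diag_nonneg' X hX j)]; linarith [diag_nonneg' X hX j]
  · have key : ∀ c : ℝ, 0 ≤ (X j j + c * X j k) + c * (X k j + c * X k k) := by
      intro c
      set v : Fin d → ℝ :=
        fun l => (if l = j then 1 else 0) + c * (if l = k then 1 else 0) with hv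
      have h := quad_nonneg X hX v
      have hinner : ∀ i, ∑ l, X i l * v l = X i j + c * X i k := by
        intro i
        have hterm : ∀ l, X i l * v l
            = (if l = j then X i j else 0) + (if l = k then c * X i k else 0) := by
          intro l
          rcases eq_or_ne l j with rfl | hlj
          · simp [hv, hjk]
            try ring
          · rcases eq_or_ne l k with rfl | hlk
            · simp [hv, hlj]
              try ring
            · simp [hv, hlj, hlk]
        rw [Finset.sum_congr rfl fun l _ => hterm l, Finset.sum_add_distrib,
          Finset.sum_ite_eq' Finset.univ j, Finset.sum_ite_eq' Finset.univ k]
        simp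
      simp only [hinner] at h
      have houter : ∑ i, v i * (X i j + c * X i k)
          = (X j j + c * X j k) + c * (X k j + c * X k k) := by
        have hterm : ∀ i, v i * (X i j + c * X i k)
            = (if i = j then X j j + c * X j k else 0)
              + (if i = k then c * (X k j + c * X k k) else 0) := by
          intro i
          rcases eq_or_ne i j with rfl | hij
          · simp [hv, hjk]
            try ring
          · rcases eq_or_ne i k with rfl | hik
            · simp [hv, hij]
              try ring
            · simp [hv, hij, hik]
        rw [Finset.sum_congr rfl fun i _ => hterm i, Finset.sum_add_distrib,
          Finset.sum_ite_eq' Finset.univ j, Finset.sum_ite_eq' Finset.univ k]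
        simp
      rw [houter] at h
      exact h
    have h1 := key 1
    have h2 := key (-1)
    rw [hsym] at h1 h2
    rw [abs_le]
    constructor <;> linarith

end aux

/-- **The shifted solution approximately satisfies the original SDP
constraints.** With `X ⪰ 0` of unit trace, `‖A‖₂ ≤ 1` (spectral norm), `E`
having at most `S` nonzero entries each of size at most `ε/min(d,S)`, and
`|f| ≤ ε`, feasibility `⟨A + E, X⟩_F ≤ b + f` of the snapped constraint
implies `⟨A, X + (3ε/d)·I⟩_F ≤ b + 5ε`. -/
theorem stmt_15 {d : ℕ} (hd : 0 < d) (S : ℕ) (hS : 0 < S) (ε : ℝ) (hε : 0 < ε)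
    (b f : ℝ) (hf : |f| ≤ ε)
    (X : Matrix (Fin d) (Fin d) ℝ) (hXsymm : X.IsSymm) (hXpsd : X.PosSemidef)
    (hXtr : X.trace = 1)
    (A : Matrix (Fin d) (Fin d) ℝ) (hA : ‖A‖ ≤ 1)
    (E : Matrix (Fin d) (Fin d) ℝ)
    (hEsupp : (Finset.univ.filter fun jk : Fin d × Fin d => E jk.1 jk.2 ≠ 0).card ≤ S)
    (hEsmall : ∀ j k, |E j k| ≤ ε / min (d : ℝ) (S : ℝ))
    (hfeas : ∑ j, ∑ k, (A + E) j k * X j k ≤ b + f) :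
    ∑ j, ∑ k, A j k * (X + (3 * ε / d) • (1 : Matrix (Fin d) (Fin d) ℝ)) j k
      ≤ b + 5 * ε := by
  have hd' : (0:ℝ) < d := by exact_mod_cast hd
  have hS' : (0:ℝ) < S := by exact_mod_cast hS
  have hm : (0:ℝ) < min (d:ℝ) (S:ℝ) := lt_min hd' hS'
  have hdiag : ∀ i, 0 ≤ X i i := diag_nonneg' X hXpsd
  have htr : ∑ i, X i i = 1 := by
    simpa [Matrix.trace, Matrix.diag] using hXtr
  have hdiag1 : ∀ i, X i i ≤ 1 := by
    intro i
    calc X i i ≤ ∑ j, X j j :=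
      Finset.single_le_sum (fun j _ => hdiag j) (Finset.mem_univ i)
    _ = 1 := htr
  set t : Fin d → Fin d → ℝ := fun j k => (X j j + X k k) / 2 with ht
  have habs : ∀ j k, |X j k| ≤ t j k := fun j k => abs_entry_le X hXpsd j k
  have ht1 : ∀ j k, t j k ≤ 1 := fun j k => by
    have := hdiag1 j; have := hdiag1 k; simp only [ht]; linarith
  have htnn : ∀ j k, 0 ≤ t j k := fun j k => by
    have := hdiag j; have := hdiag k; simp only [ht]; positivity
  have hrow : ∀ j, ∑ k, t j k = (d:ℝ) / 2 * X j j + 1 / 2 := by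
    intro j
    have : ∀ k : Fin d, t j k = X j j / 2 + X k k / 2 := fun k => by
      simp only [ht]; ring
    rw [Finset.sum_congr rfl fun k _ => this k, Finset.sum_add_distrib,
      Finset.sum_const, ← Finset.sum_div, htr, Finset.card_univ]
    simp [nsmul_eq_mul]
    ring
  have htsum : ∑ p : Fin d × Fin d, t p.1 p.2 = d := by
    rw [Fintype.sum_prod_type]
    rw [Finset.sum_congr rfl fun j _ => hrow j, Finset.sum_add_distrib,
      ← Finset.mul_sum, htr, Finset.sum_const, Finset.card_univ]
    simp [nsmul_eq_mul]
    ring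
  set s := Finset.univ.filter fun jk : Fin d × Fin d => E jk.1 jk.2 ≠ 0 with hs
  have hEsum : ∑ j, ∑ k, E j k * X j k = ∑ p ∈ s, E p.1 p.2 * X p.1 p.2 := by
    rw [← Fintype.sum_prod_type (f := fun p : Fin d × Fin d => E p.1 p.2 * X p.1 p.2)]
    refine (Finset.sum_subset (Finset.filter_subset _ _) fun p _ hp => ?_).symm
    simp only [hs, Finset.mem_filter, Finset.mem_univ, true_and, not_not] at hp
    simp [hp]
  have hts : ∑ p ∈ s, t p.1 p.2 ≤ min (d:ℝ) (S:ℝ) := by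
    apply le_min
    · calc ∑ p ∈ s, t p.1 p.2 ≤ ∑ p : Fin d × Fin d, t p.1 p.2 := by
            exact Finset.sum_le_sum_of_subset_of_nonneg (Finset.subset_univ s)
              fun p _ _ => htnn p.1 p.2
      _ = d := htsum
    · calc ∑ p ∈ s, t p.1 p.2 ≤ ∑ _p ∈ s, (1:ℝ) :=
            Finset.sum_le_sum fun p _ => ht1 p.1 p.2
      _ = s.card := by rw [Finset.sum_const, nsmul_eq_mul, mul_one]
      _ ≤ S := by exact_mod_cast hEsupp
  have hEX : |∑ j, ∑ k, E j k * X j k| ≤ ε := by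
    rw [hEsum]
    calc |∑ p ∈ s, E p.1 p.2 * X p.1 p.2| ≤ ∑ p ∈ s, |E p.1 p.2 * X p.1 p.2| :=
      Finset.abs_sum_le_sum_abs _ _
    _ ≤ ∑ p ∈ s, (ε / min (d:ℝ) (S:ℝ)) * t p.1 p.2 := by
        refine Finset.sum_le_sum fun p _ => ?_
        rw [abs_mul]
        exact mul_le_mul (hEsmall p.1 p.2) (habs p.1 p.2) (abs_nonneg _)
          (le_of_lt (by positivity))
    _ = (ε / min (d:ℝ) (S:ℝ)) * ∑ p ∈ s, t p.1 p.2 := by rw [Finset.mul_sum]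
    _ ≤ (ε / min (d:ℝ) (S:ℝ)) * min (d:ℝ) (S:ℝ) :=
        mul_le_mul_of_nonneg_left hts (le_of_lt (by positivity))
    _ = ε := by field_simp
  have hAdiag : ∀ j, |A j j| ≤ 1 := by
    intro j
    have h := A.l2_opNorm_mulVec (EuclideanSpace.single j 1)
    rw [EuclideanSpace.norm_single, norm_one, mul_one] at h
    set y : EuclideanSpace ℝ (Fin d) :=
      (EuclideanSpace.equiv (Fin d) ℝ).symm (A.mulVec (EuclideanSpace.single j 1)) with hy
    have hyj : y j = A j j := by
      show (A.mulVec (EuclideanSpace.single j 1)) j = A j j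
      simp [Matrix.mulVec, dotProduct, EuclideanSpace.single_apply, mul_ite,
        Finset.sum_ite_eq', Finset.mem_univ]
    have hx : |A j j| ≤ ‖y‖ := by
      rw [EuclideanSpace.norm_eq]
      have h1 : |A j j| = Real.sqrt (‖y j‖ ^ 2) := by
        rw [Real.norm_eq_abs, sq_abs, Real.sqrt_sq_eq_abs, hyj]
      rw [h1]
      exact Real.sqrt_le_sqrt (Finset.single_le_sum (f := fun i => ‖y i‖ ^ 2)
        (fun i _ => by positivity) (Finset.mem_univ j))
    exact hx.trans (h.trans hA)
  have htrA : |∑ j, A j j| ≤ d := by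
    calc |∑ j, A j j| ≤ ∑ j, |A j j| := Finset.abs_sum_le_sum_abs _ _
    _ ≤ ∑ _j : Fin d, (1:ℝ) := Finset.sum_le_sum fun j _ => hAdiag j
    _ = d := by simp
  have hAX : ∑ j, ∑ k, A j k * X j k ≤ b + 2 * ε := by
    have hsplit : ∑ j, ∑ k, (A + E) j k * X j k
        = (∑ j, ∑ k, A j k * X j k) + ∑ j, ∑ k, E j k * X j k := by
      rw [← Finset.sum_add_distrib]
      refine Finset.sum_congr rfl fun j _ => ?_
      rw [← Finset.sum_add_distrib]
      exact Finset.sum_congr rfl fun k _ => by simp [Matrix.add_apply, add_mul]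
    rw [hsplit] at hfeas
    have h1 : -ε ≤ ∑ j, ∑ k, E j k * X j k := neg_le_of_abs_le hEX
    have h2 : f ≤ ε := le_of_abs_le hf
    linarith
  have hIdent : ∑ j, ∑ k, A j k * (X + (3 * ε / d) • (1 : Matrix (Fin d) (Fin d) ℝ)) j k
      = (∑ j, ∑ k, A j k * X j k) + (3 * ε / d) * ∑ j, A j j := by
    rw [Finset.mul_sum, ← Finset.sum_add_distrib]
    refine Finset.sum_congr rfl fun j _ => ?_
    have hk : ∀ k, A j k * (X + (3 * ε / d) • (1 : Matrix (Fin d) (Fin d) ℝ)) j k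
        = A j k * X j k + (if k = j then (3 * ε / d) * A j j else 0) := by
      intro k
      by_cases h : k = j
      · subst h; simp [Matrix.add_apply, Matrix.smul_apply, Matrix.one_apply, mul_add]
        ring
      · simp [Matrix.add_apply, Matrix.smul_apply, Matrix.one_apply, h, Ne.symm h]
    rw [Finset.sum_congr rfl fun k _ => hk k, Finset.sum_add_distrib,
      Finset.sum_ite_eq' Finset.univ j]
    simp
  rw [hIdent]
  have h3 : (3 * ε / d) * ∑ j, A j j ≤ 3 * ε := by
    calc (3 * ε / d) * ∑ j, A j j ≤ (3 * ε / d) * d :=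
          mul_le_mul_of_nonneg_left (le_of_abs_le htrA) (by positivity)
    _ = 3 * ε := by field_simp
  linarith
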